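/- Single-tolerance level-set aggregation guarantee: Suppose the aggregation rule Agg is μ-stable, and that (ℋ, ℓ) satisfies the local level-set growth condition with parameters (μ, t, Δ, C_g) for some t ≥ 0, Δ > 0, C_g ≥ 1. Let ŷ_{t,i} := Agg(ℋ_{t,i}, x_i) for each i. Then (1/n) Σ_{i=1}^n ℓ(ŷ_{t,i}, y_i) ≤ (C_g/n)·(min_{h∈ℋ} L_S(h) + t + Δ). -/

import Mathlib

open MeasureTheory

/-- **Single-tolerance level-set aggregation guarantee.**
Setting: dataset `(x i, y i)`, hypothesis class `H` carrying a measure `μ`, loss `ℓ ≥ 0`,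
full-sample risk `LS` and leave-one-out risks `LSm i` with attained minimizers `g`, `gm i`,
level sets `Ht t` and `Hti t i`.  The aggregation rule `Agg` is `μ`-stable, and `(H, ℓ)`
satisfies the local level-set growth condition with parameters `(μ, t, Δ, Cg)`.
Then `(1/n) ∑ i ℓ(Agg(ℋ_{t,i}, x_i), y_i) ≤ (Cg/n)·(min_h LS(h) + t + Δ)`. -/
theorem single_tolerance_levelset_aggregation
    {𝒳 𝒴 𝒴' H : Type*} [MeasurableSpace H] (μ : Measure H)
    {n : ℕ} (hn : 0 < n) (x : Fin n → 𝒳) (y : Fin n → 𝒴)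
    (eval : H → 𝒳 → 𝒴') (ℓ : 𝒴' → 𝒴 → ℝ)
    (hℓpos : ∀ (y' : 𝒴') (yy : 𝒴), 0 ≤ ℓ y' yy)
    (hmeas : ∀ i : Fin n, Measurable fun h : H => ℓ (eval h (x i)) (y i))
    (LS : H → ℝ) (hLS : ∀ h, LS h = ∑ i, ℓ (eval h (x i)) (y i))
    (LSm : Fin n → H → ℝ)
    (hLSm : ∀ i h, LSm i h = ∑ j ∈ Finset.univ.erase i, ℓ (eval h (x j)) (y j))
    (g : H) (hg : ∀ h, LS g ≤ LS h)
    (gm : Fin n → H) (hgm : ∀ i h, LSm i (gm i) ≤ LSm i h)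
    (Ht : ℝ → Set H) (hHt : ∀ s, Ht s = {h : H | LS h ≤ LS g + s})
    (Hti : ℝ → Fin n → Set H)
    (hHti : ∀ s i, Hti s i = {h : H | LSm i h ≤ LSm i (gm i) + s})
    (hHtMeas : ∀ s, MeasurableSet (Ht s))
    (hHtiMeas : ∀ s i, MeasurableSet (Hti s i))
    (Agg : Set H → 𝒳 → 𝒴')
    -- μ-stability of the aggregation rule
    (hAgg : ∀ (G : Set H) (xx : 𝒳) (yy : 𝒴), MeasurableSet G → 0 < μ G → μ G < ⊤ →
      ℓ (Agg G xx) yy ≤ (μ G).toReal⁻¹ * ∫ h in G, ℓ (eval h xx) yy ∂μ)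
    (t Δ Cg : ℝ) (ht : 0 ≤ t) (hΔ : 0 < Δ) (hCg : 1 ≤ Cg)
    -- local level-set growth condition with parameters (μ, t, Δ, Cg)
    (hlow : 0 < μ (Ht (t - Δ))) (hhigh : μ (Ht (t + Δ)) < ⊤)
    (hgrowth : (μ (Ht (t + Δ))).toReal ≤ Cg * (μ (Ht (t - Δ))).toReal)
    (hsand : ∀ i : Fin n, Ht (t - Δ) ⊆ Hti t i ∧ Hti t i ⊆ Ht (t + Δ)) :
    (1 / (n : ℝ)) * ∑ i, ℓ (Agg (Hti t i) (x i)) (y i)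
      ≤ (Cg / (n : ℝ)) * (LS g + t + Δ) := by
  classical
  set A := Ht (t - Δ) with hA
  set B := Ht (t + Δ) with hB
  set M : ℝ := LS g + t + Δ with hM
  have hLSg0 : 0 ≤ LS g := by
    rw [hLS]; exact Finset.sum_nonneg fun i _ => hℓpos _ _
  have hM0 : 0 ≤ M := by positivity
  have hμA_ne : (μ A) ≠ ⊤ := by
    have : μ A ≤ μ B := measure_mono (by
      rw [hA, hB, hHt, hHt]; intro h hh; simp only [Set.mem_setOf_eq] at hh ⊢; linarith)
    exact (lt_of_le_of_lt this hhigh).ne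
  have hAtoReal : 0 < (μ A).toReal := ENNReal.toReal_pos hlow.ne' hμA_ne
  -- bound on each ℓ_i on B
  have hbound : ∀ (i : Fin n) (h : H), h ∈ B → ℓ (eval h (x i)) (y i) ≤ M := by
    intro i h hh
    rw [hB, hHt] at hh
    simp only [Set.mem_setOf_eq] at hh
    have h1 : ℓ (eval h (x i)) (y i) ≤ LS h := by
      rw [hLS]
      exact Finset.single_le_sum (f := fun j => ℓ (eval h (x j)) (y j)) (fun j _ => hℓpos _ _) (Finset.mem_univ i)
    linarith
  have hintB : ∀ i : Fin n, IntegrableOn (fun h => ℓ (eval h (x i)) (y i)) B μ := by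
    intro i
    refine Measure.integrableOn_of_bounded (M := M) hhigh.ne ((hmeas i).aestronglyMeasurable) ?_
    filter_upwards [ae_restrict_mem (hHtMeas (t + Δ))] with h hh
    rw [Real.norm_eq_abs, abs_of_nonneg (hℓpos _ _)]
    exact hbound i h hh
  -- per-index bound
  have hkey : ∀ i : Fin n, ℓ (Agg (Hti t i) (x i)) (y i)
      ≤ (μ A).toReal⁻¹ * ∫ h in B, ℓ (eval h (x i)) (y i) ∂μ := by
    intro i
    obtain ⟨hAB1, hAB2⟩ := hsand i
    have hμi_pos : 0 < μ (Hti t i) := lt_of_lt_of_le hlow (measure_mono hAB1)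
    have hμi_lt : μ (Hti t i) < ⊤ := lt_of_le_of_lt (measure_mono hAB2) hhigh
    have h1 := hAgg (Hti t i) (x i) (y i) (hHtiMeas t i) hμi_pos hμi_lt
    refine h1.trans ?_
    have hintpos : 0 ≤ ∫ h in Hti t i, ℓ (eval h (x i)) (y i) ∂μ :=
      setIntegral_nonneg (hHtiMeas t i) fun h _ => hℓpos _ _
    have hinv : (μ (Hti t i)).toReal⁻¹ ≤ (μ A).toReal⁻¹ := by
      apply inv_anti₀ hAtoReal
      exact ENNReal.toReal_le_toReal hμA_ne hμi_lt.ne |>.mpr (measure_mono hAB1)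
    have hintmono : ∫ h in Hti t i, ℓ (eval h (x i)) (y i) ∂μ
        ≤ ∫ h in B, ℓ (eval h (x i)) (y i) ∂μ := by
      apply setIntegral_mono_set (hintB i)
      · filter_upwards with h using hℓpos _ _
      · exact HasSubset.Subset.eventuallyLE hAB2
    calc (μ (Hti t i)).toReal⁻¹ * ∫ h in Hti t i, ℓ (eval h (x i)) (y i) ∂μ
        ≤ (μ A).toReal⁻¹ * ∫ h in Hti t i, ℓ (eval h (x i)) (y i) ∂μ :=
          mul_le_mul_of_nonneg_right hinv hintpos
      _ ≤ (μ A).toReal⁻¹ * ∫ h in B, ℓ (eval h (x i)) (y i) ∂μ :=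
          mul_le_mul_of_nonneg_left hintmono (by positivity)
  -- sum up
  have hsum : ∑ i, ℓ (Agg (Hti t i) (x i)) (y i) ≤ Cg * M := by
    have h1 : ∑ i, ℓ (Agg (Hti t i) (x i)) (y i)
        ≤ (μ A).toReal⁻¹ * ∫ h in B, LS h ∂μ := by
      calc ∑ i, ℓ (Agg (Hti t i) (x i)) (y i)
          ≤ ∑ i, (μ A).toReal⁻¹ * ∫ h in B, ℓ (eval h (x i)) (y i) ∂μ :=
            Finset.sum_le_sum fun i _ => hkey i
        _ = (μ A).toReal⁻¹ * ∑ i, ∫ h in B, ℓ (eval h (x i)) (y i) ∂μ := by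
            rw [Finset.mul_sum]
        _ = (μ A).toReal⁻¹ * ∫ h in B, ∑ i, ℓ (eval h (x i)) (y i) ∂μ := by
            rw [integral_finset_sum _ fun i _ => hintB i]
        _ = (μ A).toReal⁻¹ * ∫ h in B, LS h ∂μ := by
            congr 1; exact integral_congr_ae (by filter_upwards with h using (hLS h).symm)
    have h2 : ∫ h in B, LS h ∂μ ≤ M * (μ B).toReal := by
      have := setIntegral_mono_on
        (f := fun h => LS h) (g := fun _ => M)
        (by
          apply (integrable_congr (g := fun h => ∑ i, ℓ (eval h (x i)) (y i)) ?_).mpr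
          · exact integrable_finset_sum _ fun i _ => hintB i
          · filter_upwards with h using hLS h)
        (integrableOn_const hhigh.ne)
        (hHtMeas (t + Δ))
        (fun h hh => by
          rw [hB, hHt] at hh
          simp only [Set.mem_setOf_eq] at hh
          show LS h ≤ M
          exact le_trans hh (by rw [hM]; linarith))
      rw [hB]; simpa [mul_comm, Measure.real] using this
    calc ∑ i, ℓ (Agg (Hti t i) (x i)) (y i)
        ≤ (μ A).toReal⁻¹ * ∫ h in B, LS h ∂μ := h1
      _ ≤ (μ A).toReal⁻¹ * (M * (μ B).toReal) :=
          mul_le_mul_of_nonneg_left h2 (by positivity)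
      _ ≤ (μ A).toReal⁻¹ * (M * (Cg * (μ A).toReal)) := by
          apply mul_le_mul_of_nonneg_left _ (by positivity)
          exact mul_le_mul_of_nonneg_left hgrowth hM0
      _ = Cg * M := by field_simp
  have hn0 : (0:ℝ) < n := by exact_mod_cast hn
  refine le_trans (mul_le_mul_of_nonneg_left hsum (by positivity)) (le_of_eq ?_)
  rw [hM]; ring
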